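/- Let M be a real |S|×n matrix, μ₀ ∈ ℝ^{|S|}, γ ∈ [0,1), and Φ := {d ∈ ℝ^n : d ≥ 0, M d = (1−γ)μ₀} be nonempty and bounded. Let l ≥ 0 be a vector with l(i) ≥ δ for all i in an index set I, and suppose r := Mᵀv − l for some v ∈ ℝ^{|S|}. If d_e ∈ Φ satisfies (1−γ)⟨μ₀,v⟩ − ⟨r, d_e⟩ ≤ ε, then for every d ∈ Φ, max_{d'∈Φ}⟨r,d'⟩ − ⟨r,d⟩ ≥ δ·∑_{i∈I} d(i) − ε. -/

import Mathlib

open scoped BigOperators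

noncomputable def dot {n : ℕ} (r d : Fin n → ℝ) : ℝ := ∑ i, r i * d i

/-- Occupancy polytope: d ≥ 0 and M d = (1 − γ) μ₀. -/
def occupancy {m n : ℕ} (M : Matrix (Fin m) (Fin n) ℝ) (μ0 : Fin m → ℝ) (γ : ℝ) :
    Set (Fin n → ℝ) :=
  {d | (∀ i, 0 ≤ d i) ∧ M.mulVec d = (1 - γ) • μ0}

theorem stmt_9 {m n : ℕ} (M : Matrix (Fin m) (Fin n) ℝ) (μ0 : Fin m → ℝ) (γ : ℝ)
    (hγ : 0 ≤ γ ∧ γ < 1)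
    (hne : (occupancy M μ0 γ).Nonempty) (hbd : Bornology.IsBounded (occupancy M μ0 γ))
    (l : Fin n → ℝ) (hl : ∀ i, 0 ≤ l i) (δ : ℝ) (I : Finset (Fin n))
    (hI : ∀ i ∈ I, δ ≤ l i)
    (v : Fin m → ℝ) (r : Fin n → ℝ) (hr : r = M.transpose.mulVec v - l)
    (de : Fin n → ℝ) (hde : de ∈ occupancy M μ0 γ) (ε : ℝ)
    (hfeas : (1 - γ) * dot μ0 v - dot r de ≤ ε) :
    ∀ d ∈ occupancy M μ0 γ,
      sSup ((fun dp => dot r dp) '' occupancy M μ0 γ) - dot r d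
        ≥ δ * (∑ i ∈ I, d i) - ε := by
  intro d hd
  obtain ⟨hd0, hdM⟩ := hd
  obtain ⟨hde0, hdeM⟩ := hde
  -- key identity: for x ∈ Φ, dot r x = (1-γ) * dot μ0 v - dot l x
  have key : ∀ x : Fin n → ℝ, M.mulVec x = (1 - γ) • μ0 →
      dot r x = (1 - γ) * dot μ0 v - dot l x := by
    intro x hx
    have h1 : dot r x = (∑ i, (M.transpose.mulVec v) i * x i) - dot l x := by
      simp [hr, dot, sub_mul, Finset.sum_sub_distrib]
    have h2 : (∑ i, (M.transpose.mulVec v) i * x i)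
        = ∑ j, v j * (M.mulVec x) j := by
      simp only [Matrix.mulVec, dotProduct, Matrix.transpose_apply,
        Finset.sum_mul, Finset.mul_sum]
      rw [Finset.sum_comm]
      exact Finset.sum_congr rfl fun i _ => Finset.sum_congr rfl fun j _ => by ring
    have h3 : (∑ j, v j * (M.mulVec x) j) = (1 - γ) * dot μ0 v := by
      rw [hx]
      simp only [Pi.smul_apply, smul_eq_mul, dot, Finset.mul_sum]
      exact Finset.sum_congr rfl fun j _ => by ring
    rw [h1, h2, h3]
  have hkd := key d hdM
  have hkde := key de hdeM
  -- dot l de ≤ ε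
  have hlde : dot l de ≤ ε := by linarith [hfeas, hkde]
  -- dot l d ≥ δ * ∑_{i∈I} d i
  have hld : δ * (∑ i ∈ I, d i) ≤ dot l d := by
    have h1 : ∑ i ∈ I, δ * d i ≤ ∑ i ∈ I, l i * d i :=
      Finset.sum_le_sum fun i hi => mul_le_mul_of_nonneg_right (hI i hi) (hd0 i)
    have h2 : ∑ i ∈ I, l i * d i ≤ ∑ i, l i * d i := by
      apply Finset.sum_le_sum_of_subset_of_nonneg (Finset.subset_univ I)
      intro i _ _
      exact mul_nonneg (hl i) (hd0 i)
    calc δ * (∑ i ∈ I, d i) = ∑ i ∈ I, δ * d i := by rw [Finset.mul_sum]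
      _ ≤ ∑ i, l i * d i := le_trans h1 h2
      _ = dot l d := rfl
  -- sSup bound
  obtain ⟨C, hC⟩ := (Metric.isBounded_iff_subset_closedBall 0).mp hbd
  have hbdd : BddAbove ((fun dp => dot r dp) '' occupancy M μ0 γ) := by
    refine ⟨∑ i, |r i| * C, ?_⟩
    rintro y ⟨x, hx, rfl⟩
    have hxC : ∀ i, |x i| ≤ C := by
      intro i
      have := hC hx
      simp only [Metric.mem_closedBall, dist_zero_right] at this
      calc |x i| = ‖x i‖ := rfl
        _ ≤ ‖x‖ := norm_le_pi_norm x i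
        _ ≤ C := this
    calc dot r x ≤ ∑ i, |r i * x i| := Finset.sum_le_sum fun i _ => le_abs_self _
      _ = ∑ i, |r i| * |x i| := by simp [abs_mul]
      _ ≤ ∑ i, |r i| * C := Finset.sum_le_sum fun i _ =>
          mul_le_mul_of_nonneg_left (hxC i) (abs_nonneg _)
  have hmem : dot r de ∈ (fun dp => dot r dp) '' occupancy M μ0 γ :=
    ⟨de, ⟨hde0, hdeM⟩, rfl⟩
  have hsup : dot r de ≤ sSup ((fun dp => dot r dp) '' occupancy M μ0 γ) :=
    le_csSup hbdd hmem
  linarith
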